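/- For every κ > 0 and every μ with 0 ≤ μ < 1/2, there exists r > 0 such that the complex Hermitian matrix Λ(κ·V(r) + μ·I₄)Λ − (i/2)Δ is not positive semidefinite. (This is the covariance-matrix form of the necessity direction of Proposition 1: if the total noise μ < 1/2, the channel Φ(κ,μ)⊗Φ(κ,μ) preserves the entanglement of a sufficiently squeezed two-mode squeezed vacuum state.) -/

import Mathlib

set_option maxHeartbeats 1000000


open Matrix ComplexOrder

/-- Covariance matrix of the two-mode squeezed vacuum with squeezing parameter `r`. -/
noncomputable def Vtms (r : ℝ) : Matrix (Fin 4) (Fin 4) ℝ :=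
  (1/2 : ℝ) • !![Real.cosh (2*r), 0, Real.sinh (2*r), 0;
                 0, Real.cosh (2*r), 0, -Real.sinh (2*r);
                 Real.sinh (2*r), 0, Real.cosh (2*r), 0;
                 0, -Real.sinh (2*r), 0, Real.cosh (2*r)]

/-- The 4×4 symplectic form, block diagonal with blocks [[0,-1],[1,0]]. -/
def Δ4 : Matrix (Fin 4) (Fin 4) ℝ :=
  !![0,-1,0,0; 1,0,0,0; 0,0,0,-1; 0,0,1,0]

/-- Partial transposition of the second mode on covariance matrices. -/
def Λ4 : Matrix (Fin 4) (Fin 4) ℝ :=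
  !![1,0,0,0; 0,1,0,0; 0,0,1,0; 0,0,0,-1]

/-- The complex Hermitian matrix `V - (i/2)Δ` built from a real 4×4 matrix `V`. -/
noncomputable def simonMatrix (V : Matrix (Fin 4) (Fin 4) ℝ) : Matrix (Fin 4) (Fin 4) ℂ :=
  V.map (fun x => (x : ℂ)) - (Complex.I / 2) • Δ4.map (fun x => (x : ℂ))


theorem entanglement_preserved_low_noise (κ μ : ℝ) (hκ : 0 < κ) (hμ0 : 0 ≤ μ)
    (hμ : μ < 1/2) :
    ∃ r : ℝ, 0 < r ∧
      ¬ (simonMatrix (Λ4 * (κ • Vtms r + μ • (1 : Matrix (Fin 4) (Fin 4) ℝ)) * Λ4)).PosSemidef := by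
  set r : ℝ := max 1 ((1/2) * Real.log (2*κ/(1-2*μ))) with hrdef
  have hr1 : (1:ℝ) ≤ r := le_max_left _ _
  have hden : (0:ℝ) < 1 - 2*μ := by linarith
  have hfrac : (0:ℝ) < 2*κ/(1-2*μ) := by positivity
  have hexp : Real.exp (-(2*r)) ≤ (1-2*μ)/(2*κ) := by
    have h1 : Real.log (2*κ/(1-2*μ)) ≤ 2*r := by
      have := le_max_right 1 ((1/2) * Real.log (2*κ/(1-2*μ)))
      linarith [this]
    have : -(2*r) ≤ Real.log ((1-2*μ)/(2*κ)) := by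
      rw [show (1-2*μ)/(2*κ) = (2*κ/(1-2*μ))⁻¹ by field_simp, Real.log_inv]
      linarith
    calc Real.exp (-(2*r)) ≤ Real.exp (Real.log ((1-2*μ)/(2*κ))) := Real.exp_le_exp.2 this
      _ = (1-2*μ)/(2*κ) := Real.exp_log (by positivity)
  refine ⟨r, lt_of_lt_of_le one_pos hr1, ?_⟩
  intro h
  have key := h.dotProduct_mulVec_nonneg ![1, Complex.I, -1, -Complex.I]
  simp only [simonMatrix, Vtms, Λ4, Δ4, Matrix.mulVec, Matrix.mul_apply, dotProduct,
    Fin.sum_univ_four, Matrix.sub_apply, Matrix.add_apply, Matrix.smul_apply, Matrix.map_apply,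
    Matrix.one_apply, Matrix.cons_val', Matrix.cons_val_zero, Matrix.cons_val_one, Matrix.head_cons,
    Matrix.empty_val', Matrix.cons_val_fin_one, Matrix.head_fin_const, Matrix.cons_val_two,
    Matrix.tail_cons, Matrix.cons_val_three, Pi.star_apply, smul_eq_mul] at key
  rw [Complex.le_def] at key
  obtain ⟨key, -⟩ := key
  push_cast at key
  simp [Complex.add_re, Complex.mul_re, Complex.mul_im, Complex.I_re, Complex.I_im] at key
  have hcs : Real.cosh (2*r) - Real.sinh (2*r) = Real.exp (-(2*r)) := by
    rw [Real.cosh_sub_sinh]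
  have h2 : 2*κ*Real.exp (-(2*r)) ≤ 1 - 2*μ := by
    have := mul_le_mul_of_nonneg_left hexp (by positivity : (0:ℝ) ≤ 2*κ)
    calc 2*κ*Real.exp (-(2*r)) ≤ 2*κ*((1-2*μ)/(2*κ)) := this
      _ = 1 - 2*μ := by rw [mul_comm, div_mul_cancel₀ _ (by positivity : (2*κ:ℝ) ≠ 0)]
  norm_num at key
  have hc : (Complex.cosh (2*(r:ℂ))).re = Real.cosh (2*r) := by
    rw [show (2*(r:ℂ)) = ((2*r:ℝ):ℂ) by push_cast; ring, Complex.cosh_ofReal_re]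
  have hs : (Complex.sinh (2*(r:ℂ))).re = Real.sinh (2*r) := by
    rw [show (2*(r:ℂ)) = ((2*r:ℝ):ℂ) by push_cast; ring, Complex.sinh_ofReal_re]
  rw [hc, hs] at key
  nlinarith [key, hcs, h2]
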